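/- The constant 1/4 in the inequality (1/4)ρ_{𝔹ⁿ}(x,y) ≤ τ̃_{𝔹ⁿ}(x,y) is sharp: with x = t e₁ and y = -t e₁ for t ∈ (0,1), the ratio τ̃_{𝔹ⁿ}(x,y)/ρ_{𝔹ⁿ}(x,y) = log(1 + 2t/√(1-t²)) / (2 log((1+t)/(1-t))) tends to 1/4 as t → 1⁻. -/

import Mathlib

open Real Filter Metric

/-- The scale invariant Cassinian metric
`τ̃_D(x,y) = log(1 + sup_{p ∈ ∂D} |x-y|/√(|x-p||y-p|))`. -/
noncomputable def scTau {E : Type*} [NormedAddCommGroup E] (D : Set E) (x y : E) : ℝ :=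
  Real.log (1 + ⨆ p : frontier D, ‖x - y‖ / Real.sqrt (‖x - (p : E)‖ * ‖y - (p : E)‖))

lemma aux_sq {E : Type*} [NormedAddCommGroup E] [InnerProductSpace ℝ E] (x p : E)
    (hp : ‖p‖ = 1) : (1 - ‖x‖^2)^2 ≤ (‖x - p‖ * ‖x + p‖)^2 := by
  have h1 : ‖x - p‖^2 = ‖x‖^2 - 2*(inner ℝ x p : ℝ) + 1 := by
    rw [norm_sub_sq_real, hp]; ring_nf
  have h2 : ‖x + p‖^2 = ‖x‖^2 + 2*(inner ℝ x p : ℝ) + 1 := by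
    rw [norm_add_sq_real, hp]; ring_nf
  have hcs : (inner ℝ x p : ℝ)^2 ≤ ‖x‖^2 := by
    have h := abs_real_inner_le_norm x p
    rw [hp, mul_one] at h
    nlinarith [abs_nonneg (inner ℝ x p : ℝ), sq_abs (inner ℝ x p : ℝ), norm_nonneg x]
  nlinarith [h1, h2, hcs]

lemma aux_prod {E : Type*} [NormedAddCommGroup E] [InnerProductSpace ℝ E] (x p : E)
    (hp : ‖p‖ = 1) (hx : ‖x‖ < 1) : 1 - ‖x‖^2 ≤ ‖x - p‖ * ‖x + p‖ := by
  have h0 : (0:ℝ) ≤ 1 - ‖x‖^2 := by nlinarith [norm_nonneg x]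
  have h1 : (0:ℝ) ≤ ‖x - p‖ * ‖x + p‖ := by positivity
  nlinarith [aux_sq x p hp]

theorem stmt16 (n : ℕ) (hn : 0 < n) :
    (∀ t ∈ Set.Ioo (0 : ℝ) 1,
      scTau (Metric.ball (0 : EuclideanSpace ℝ (Fin n)) 1)
          (t • EuclideanSpace.single (⟨0, hn⟩ : Fin n) (1 : ℝ))
          (-(t • EuclideanSpace.single (⟨0, hn⟩ : Fin n) (1 : ℝ)))
        = Real.log (1 + 2 * t / Real.sqrt (1 - t ^ 2))) ∧
    Filter.Tendsto
      (fun t : ℝ =>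
        Real.log (1 + 2 * t / Real.sqrt (1 - t ^ 2))
          / (2 * Real.log ((1 + t) / (1 - t))))
      (nhdsWithin 1 (Set.Iio 1)) (nhds (1 / 4)) := by
  constructor
  · -- Part 1
    intro t ht
    obtain ⟨ht0, ht1⟩ := ht
    rw [scTau]
    congr 2
    set E := EuclideanSpace ℝ (Fin n)
    set e : E := EuclideanSpace.single (⟨0, hn⟩ : Fin n) (1 : ℝ) with he
    have hne : ‖e‖ = 1 := by rw [he, EuclideanSpace.norm_single]; norm_num
    set x : E := t • e with hx
    have hnx : ‖x‖ = t := by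
      rw [hx, norm_smul, hne, mul_one, Real.norm_eq_abs, abs_of_pos ht0]
    have hsq : (0:ℝ) < 1 - t^2 := by nlinarith
    have hfr : frontier (Metric.ball (0 : E) 1) = Metric.sphere (0 : E) 1 :=
      frontier_ball 0 one_ne_zero
    have hes : e ∈ frontier (Metric.ball (0 : E) 1) := by
      rw [hfr, mem_sphere_zero_iff_norm]; exact hne
    have hxy : ‖x - (-x)‖ = 2 * t := by
      have h : x - (-x) = (2*t) • e := by rw [hx]; module
      rw [h, norm_smul, hne, mul_one, Real.norm_eq_abs, abs_of_pos (by linarith)]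
    have hbd : ∀ p : frontier (Metric.ball (0 : E) 1),
        ‖x - (-x)‖ / Real.sqrt (‖x - (p : E)‖ * ‖(-x) - (p : E)‖)
          ≤ 2 * t / Real.sqrt (1 - t ^ 2) := by
      intro p
      have hp1 : ‖(p : E)‖ = 1 := by
        have h := (Set.ext_iff.mp hfr _).mp p.2
        rwa [mem_sphere_zero_iff_norm] at h
      have hprod : 1 - t^2 ≤ ‖x - (p : E)‖ * ‖(-x) - (p : E)‖ := by
        have h := aux_prod x (p : E) hp1 (by rw [hnx]; exact ht1)
        rw [hnx] at h
        have heq : (-x) - (p : E) = -(x + (p : E)) := by module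
        rw [heq, norm_neg]
        exact h
      rw [hxy]
      apply div_le_div_of_nonneg_left (by linarith) (Real.sqrt_pos.2 hsq)
      exact Real.sqrt_le_sqrt hprod
    have hbdd : BddAbove (Set.range fun p : frontier (Metric.ball (0 : E) 1) =>
        ‖x - (-x)‖ / Real.sqrt (‖x - (p : E)‖ * ‖(-x) - (p : E)‖)) := by
      refine ⟨2 * t / Real.sqrt (1 - t ^ 2), ?_⟩
      rintro r ⟨p, rfl⟩
      exact hbd p
    have hval : ‖x - ((⟨e, hes⟩ : frontier (Metric.ball (0 : E) 1)) : E)‖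
        * ‖(-x) - ((⟨e, hes⟩ : frontier (Metric.ball (0 : E) 1)) : E)‖ = 1 - t^2 := by
      have h1 : x - e = (t - 1) • e := by rw [hx]; module
      have h2 : (-x) - e = (-t - 1) • e := by rw [hx]; module
      show ‖x - e‖ * ‖(-x) - e‖ = 1 - t^2
      rw [h1, h2, norm_smul, norm_smul, hne, mul_one, mul_one, Real.norm_eq_abs,
        Real.norm_eq_abs, abs_of_neg (by linarith), abs_of_neg (by linarith)]
      ring_nf
    have : Nonempty (frontier (Metric.ball (0 : E) 1)) := ⟨⟨e, hes⟩⟩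
    apply le_antisymm
    · exact ciSup_le hbd
    · refine le_ciSup_of_le hbdd ⟨e, hes⟩ ?_
      rw [hval, hxy]
  · -- Part 2
    set l : Filter ℝ := nhdsWithin 1 (Set.Iio 1) with hl
    have hlne : l.NeBot := by
      rw [hl]; exact nhdsLT_neBot 1
    have hle : l ≤ nhds (1:ℝ) := nhdsWithin_le_nhds
    set a : ℝ → ℝ := fun t => Real.log (Real.sqrt (1 - t^2) + 2*t) - (1/2) * Real.log (1+t)
    set b : ℝ → ℝ := fun t => 2 * Real.log (1+t)
    set u : ℝ → ℝ := fun t => Real.log (1-t)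
    have hu : Tendsto u l atBot := by
      apply Real.tendsto_log_nhdsGT_zero.comp
      rw [hl]
      apply tendsto_nhdsWithin_of_tendsto_nhds_of_eventually_within
      · have : Tendsto (fun t : ℝ => 1 - t) (nhds 1) (nhds (1-1)) :=
          (continuous_const.sub continuous_id).tendsto 1
        simpa using this.mono_left hle
      · filter_upwards [self_mem_nhdsWithin] with t ht
        simp only [Set.mem_Iio] at ht ⊢
        simp [Set.mem_Ioi]; linarith
    have ha : Tendsto a l (nhds ((1/2) * Real.log 2)) := by
      have h1 : Tendsto (fun t : ℝ => Real.log (Real.sqrt (1 - t^2) + 2*t)) l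
          (nhds (Real.log 2)) := by
        have hc : Tendsto (fun t : ℝ => Real.sqrt (1 - t^2) + 2*t) l (nhds 2) := by
          have : Tendsto (fun t : ℝ => Real.sqrt (1 - t^2) + 2*t) (nhds 1)
              (nhds (Real.sqrt (1 - 1^2) + 2*1)) := by
            apply Tendsto.add
            · exact (Real.continuous_sqrt.comp (continuous_const.sub (continuous_pow 2))).tendsto 1
            · exact (continuous_const.mul continuous_id).tendsto 1
          simpa using this.mono_left hle
        exact (Real.continuousAt_log (by norm_num)).tendsto.comp hc
      have h2 : Tendsto (fun t : ℝ => Real.log (1 + t)) l (nhds (Real.log 2)) := by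
        have hc : Tendsto (fun t : ℝ => 1 + t) l (nhds 2) := by
          have : Tendsto (fun t : ℝ => 1 + t) l (nhds (1+1)) :=
            ((continuous_const.add continuous_id).tendsto 1).mono_left hle
          norm_num at this; exact this
        exact (Real.continuousAt_log (by norm_num)).tendsto.comp hc
      have := h1.sub (h2.const_mul (1/2 : ℝ))
      convert this using 2; ring_nf
    have hb : Tendsto b l (nhds (2 * Real.log 2)) := by
      have h2 : Tendsto (fun t : ℝ => Real.log (1 + t)) l (nhds (Real.log 2)) := by
        have hc : Tendsto (fun t : ℝ => 1 + t) l (nhds 2) := by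
          have : Tendsto (fun t : ℝ => 1 + t) l (nhds (1+1)) :=
            ((continuous_const.add continuous_id).tendsto 1).mono_left hle
          norm_num at this; exact this
        exact (Real.continuousAt_log (by norm_num)).tendsto.comp hc
      exact h2.const_mul 2
    have hdiv : ∀ (f : ℝ → ℝ) (c : ℝ), Tendsto f l (nhds c) →
        Tendsto (fun t => f t / u t) l (nhds 0) := by
      intro f c hf
      have h1 : Tendsto (fun t => f t / (-(u t))) l (nhds 0) :=
        hf.div_atTop (tendsto_neg_atBot_atTop.comp hu)
      have h2 := h1.neg
      simp only [neg_zero] at h2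
      convert h2 using 2 with t
      rw [div_neg, neg_neg]
    have hau := hdiv a _ ha
    have hbu := hdiv b _ hb
    have hmain : Tendsto (fun t => (a t / u t - 1/2) / (b t / u t - 2)) l (nhds (1/4)) := by
      have := (hau.sub_const (1/2)).div (hbu.sub_const 2) (by norm_num)
      convert this using 2
      all_goals norm_num
    refine hmain.congr' ?_
    filter_upwards [Ioo_mem_nhdsLT_of_mem
      (by constructor <;> norm_num : (1:ℝ) ∈ Set.Ioc (1/2) 1)] with t htm
    obtain ⟨ht1, ht2⟩ := htm
    have h1t : (0:ℝ) < 1 - t := by linarith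
    have h1t' : (0:ℝ) < 1 + t := by linarith
    have ht0 : (0:ℝ) < t := by linarith
    have hsq : (0:ℝ) < 1 - t^2 := by nlinarith
    have husq : u t ≠ 0 := by
      have : u t < 0 := Real.log_neg h1t (by linarith)
      linarith
    have hnum : a t - u t / 2 = Real.log (1 + 2 * t / Real.sqrt (1 - t ^ 2)) := by
      have hs : (0:ℝ) < Real.sqrt (1 - t^2) := Real.sqrt_pos.2 hsq
      have h : 1 + 2*t/Real.sqrt (1 - t^2) = (Real.sqrt (1 - t^2) + 2*t) / Real.sqrt (1 - t^2) := by
        field_simp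
      rw [h, Real.log_div (by positivity) (ne_of_gt hs), Real.log_sqrt (le_of_lt hsq)]
      have h2 : (1:ℝ) - t^2 = (1+t)*(1-t) := by ring_nf
      rw [h2, Real.log_mul (ne_of_gt h1t') (ne_of_gt h1t)]
      simp only [a, u]
      ring_nf
    have hden : b t - 2 * u t = 2 * Real.log ((1+t)/(1-t)) := by
      rw [Real.log_div (ne_of_gt h1t') (ne_of_gt h1t)]
      simp only [b, u]; ring_nf
    rw [← hnum, ← hden]
    have e1 : a t / u t - 1/2 = (a t - u t/2) / u t := by
      rw [eq_div_iff husq, sub_mul, div_mul_cancel₀ _ husq]; ring_nf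
    have e2 : b t / u t - 2 = (b t - 2 * u t) / u t := by
      rw [eq_div_iff husq, sub_mul, div_mul_cancel₀ _ husq]
    rw [e1, e2, div_div_div_cancel_right₀ husq]
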